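/- arXiv:2207.06221 — 2 statements merged into one kernel-verified Lean document; each statement's English description precedes it below -/
import Mathlib

section
/- In a bipartite graph, two neighborhood subgraphs S_u and S_i are subtree-isomorphic if and only if they are subgraph-isomorphic. -/
/-- In a bipartite graph, two neighborhood subgraphs `S_u` (induced by `Ñ_u¹ = N_u¹ ∪ {u}`)
and `S_i` are subtree-isomorphic (a feature-preserving bijection `h : Ñ_u¹ → Ñ_i¹` with
`h(u) = i`) if and only if they are subgraph-isomorphic (the bijection moreover preserves
edges and non-edges of the induced subgraphs). -/
theorem subtree_iso_iff_subgraph_iso_of_bipartite {V F : Type*} (G : SimpleGraph V)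
    (U I : Set V) (hcover : ∀ v, v ∈ U ∨ v ∈ I) (hdisj : Disjoint U I)
    (hbip : ∀ a b, G.Adj a b → (a ∈ U ∧ b ∈ I) ∨ (a ∈ I ∧ b ∈ U))
    (feat : ℕ → V → F) (u i : V) :
    (∃ h : (insert u (G.neighborSet u) : Set V) ≃ (insert i (G.neighborSet i) : Set V),
        (h ⟨u, Set.mem_insert u _⟩ : V) = i ∧
        ∀ (l : ℕ) (v : (insert u (G.neighborSet u) : Set V)), feat l v = feat l (h v)) ↔
    (∃ h : (insert u (G.neighborSet u) : Set V) ≃ (insert i (G.neighborSet i) : Set V),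
        (h ⟨u, Set.mem_insert u _⟩ : V) = i ∧
        (∀ (l : ℕ) (v : (insert u (G.neighborSet u) : Set V)), feat l v = feat l (h v)) ∧
        (∀ v₁ v₂ : (insert u (G.neighborSet u) : Set V),
          G.Adj v₁ v₂ ↔ G.Adj (h v₁) (h v₂))) := by
  have hd : ∀ y, y ∈ U → y ∈ I → False := fun y hy1 hy2 => hdisj.ne_of_mem hy1 hy2 rfl
  -- In a bipartite graph, two neighbors of the same vertex are never adjacent.
  have indep : ∀ x a b : V, G.Adj x a → G.Adj x b → ¬ G.Adj a b := by
    intro x a b hxa hxb hab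
    rcases hbip x a hxa with ⟨hxU, haI⟩ | ⟨hxI, haU⟩ <;>
      rcases hbip x b hxb with ⟨hxU', hbI⟩ | ⟨hxI', hbU⟩ <;>
      rcases hbip a b hab with ⟨h1, h2⟩ | ⟨h1, h2⟩ <;>
      first
        | exact hd x ‹x ∈ U› ‹x ∈ I›
        | exact hd a h1 haI
        | exact hd a haU h1
        | exact hd b h2 hbI
        | exact hd b hbU h2
  -- Characterize adjacency inside the neighborhood subgraph of `x`.
  have char : ∀ x : V, ∀ a b : (insert x (G.neighborSet x) : Set V),
      G.Adj a b ↔ (((a : V) = x ∧ (b : V) ≠ x) ∨ ((b : V) = x ∧ (a : V) ≠ x)) := by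
    intro x a b
    obtain ⟨a, ha⟩ := a
    obtain ⟨b, hb⟩ := b
    rcases ha with rfl | haN <;> rcases hb with rfl | hbN
    · simp [G.loopless]
    · have hbx : b ≠ a := fun e => G.loopless.irrefl a (e ▸ hbN)
      simp [show G.Adj a b from hbN, hbx]
    · have hax : a ≠ b := fun e => G.loopless.irrefl b (e ▸ haN)
      simp [(show G.Adj b a from haN).symm, hax]
    · have hax : a ≠ x := fun e => G.loopless.irrefl x (e ▸ haN)
      have hbx : b ≠ x := fun e => G.loopless.irrefl x (e ▸ hbN)
      simp [indep x a b haN hbN, hax, hbx]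
  constructor
  · rintro ⟨h, hu, hf⟩
    refine ⟨h, hu, hf, ?_⟩
    intro v₁ v₂
    have hiff : ∀ v : (insert u (G.neighborSet u) : Set V),
        ((h v : V) = i) ↔ ((v : V) = u) := by
      intro v
      constructor
      · intro hv
        have heq : h v = h ⟨u, Set.mem_insert u _⟩ := by
          apply Subtype.ext; rw [hv, hu]
        exact congrArg Subtype.val (h.injective heq)
      · intro hv
        have : v = ⟨u, Set.mem_insert u _⟩ := Subtype.ext hv
        rw [this, hu]
    rw [char u v₁ v₂, char i (h v₁) (h v₂)]
    simp only [ne_eq, hiff]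
  · rintro ⟨h, hu, hf, _⟩
    exact ⟨h, hu, hf⟩
end

section
/- There exist two rooted neighborhood subgraphs in a bipartite setting that are subgraph-isomorphic (hence indistinguishable by the 1-WL color refinement restricted to 1-hop trees) but not bipartite-subgraph-isomorphic: concretely, roots u and u' each with three neighbors carrying identical features such that in the first graph the three neighbors pairwise share no second-hop common neighbors while in the second graph two of them do; no feature-preserving bijection of the 2-hop neighborhoods preserving all edges exists. -/
namespace BipSubIso

def L : List (Fin 9 × Fin 9) :=
  [(0,1),(0,2),(0,3),(4,5),(4,6),(4,7),(8,5),(8,6)]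

def G9 : SimpleGraph (Fin 9) where
  Adj a b := (a, b) ∈ L ∨ (b, a) ∈ L
  symm := ⟨fun a b h => h.symm⟩
  loopless := ⟨fun a => (by decide : ∀ a : Fin 9, ¬((a, a) ∈ L ∨ (a, a) ∈ L)) a⟩

instance : DecidableRel G9.Adj := fun a b =>
  inferInstanceAs (Decidable ((a, b) ∈ L ∨ (b, a) ∈ L))

lemma walk_inv {S : Set (Fin 9)} [DecidablePred (· ∈ S)]
    (hS : ∀ a b, G9.Adj a b → a ∈ S → b ∈ S) {a b : Fin 9}
    (w : G9.Walk a b) (ha : a ∈ S) : b ∈ S := by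
  induction w with
  | nil => exact ha
  | cons h _ ih => exact ih (hS _ _ h ha)

lemma reach_left {v : Fin 9} (h : G9.Reachable 0 v) : v.val ≤ 3 := by
  obtain ⟨w⟩ := h
  exact walk_inv (S := {x | x.val ≤ 3}) (by decide) w (by decide)

lemma reach_right {v : Fin 9} (h : G9.Reachable 4 v) : 4 ≤ v.val := by
  obtain ⟨w⟩ := h
  exact walk_inv (S := {x | 4 ≤ x.val}) (by decide) w (by decide)

lemma nbhd_left : G9.neighborSet 0 = {1, 2, 3} := by
  ext v
  show G9.Adj 0 v ↔ _
  simp only [Set.mem_insert_iff, Set.mem_singleton_iff]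
  revert v; decide

lemma nbhd_right : G9.neighborSet 4 = {5, 6, 7} := by
  ext v
  show G9.Adj 4 v ↔ _
  simp only [Set.mem_insert_iff, Set.mem_singleton_iff]
  revert v; decide

lemma dist48 : G9.dist 4 8 = 2 := by
  let hw : G9.Walk 4 8 :=
    SimpleGraph.Walk.cons (by decide : G9.Adj 4 5)
      (SimpleGraph.Walk.cons (by decide : G9.Adj 5 8) SimpleGraph.Walk.nil)
  have hle : G9.dist 4 8 ≤ 2 := by
    have := SimpleGraph.dist_le hw
    simpa [hw, SimpleGraph.Walk.length_cons, SimpleGraph.Walk.length_nil] using this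
  have h0 : G9.dist 4 8 ≠ 0 := by
    intro h
    have := (SimpleGraph.dist_eq_zero_iff_eq_or_not_reachable).mp h
    rcases this with h | h
    · exact absurd h (by decide)
    · exact h ⟨hw⟩
  have h1 : G9.dist 4 8 ≠ 1 := by
    intro h
    exact absurd (SimpleGraph.dist_eq_one_iff_adj.mp h) (by decide)
  omega

lemma twohop_left :
    (insert 0 (G9.neighborSet 0) ∪ {v | G9.dist 0 v = 2}) = ({0, 1, 2, 3} : Set (Fin 9)) := by
  ext v
  simp only [Set.mem_union, Set.mem_insert_iff, Set.mem_setOf_eq, nbhd_left,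
    Set.mem_singleton_iff]
  constructor
  · rintro (h | h)
    · tauto
    · -- dist 0 v = 2; v reachable from 0
      have hr : G9.Reachable 0 v := by
        by_contra hnr
        rw [SimpleGraph.dist_eq_zero_of_not_reachable hnr] at h
        exact two_ne_zero h.symm
      have := reach_left hr
      have hv : v = 0 ∨ v = 1 ∨ v = 2 ∨ v = 3 := by omega
      -- but dist 0 v ∈ {0,1} for such v, contradiction
      rcases hv with rfl | rfl | rfl | rfl
      · rw [SimpleGraph.dist_self] at h; exact absurd h (by decide)
      · rw [SimpleGraph.dist_eq_one_iff_adj.mpr (by decide)] at h; exact absurd h (by decide)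
      · rw [SimpleGraph.dist_eq_one_iff_adj.mpr (by decide)] at h; exact absurd h (by decide)
      · rw [SimpleGraph.dist_eq_one_iff_adj.mpr (by decide)] at h; exact absurd h (by decide)
  · intro h; exact Or.inl h

lemma twohop_right :
    (insert 4 (G9.neighborSet 4) ∪ {v | G9.dist 4 v = 2}) = ({4, 5, 6, 7, 8} : Set (Fin 9)) := by
  ext v
  simp only [Set.mem_union, Set.mem_insert_iff, Set.mem_setOf_eq, nbhd_right,
    Set.mem_singleton_iff]
  constructor
  · rintro (h | h)
    · tauto
    · have hr : G9.Reachable 4 v := by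
        by_contra hnr
        rw [SimpleGraph.dist_eq_zero_of_not_reachable hnr] at h
        exact two_ne_zero h.symm
      have := reach_right hr
      have hv : v = 4 ∨ v = 5 ∨ v = 6 ∨ v = 7 ∨ v = 8 := by omega
      tauto
  · rintro (rfl | rfl | rfl | rfl | rfl)
    · exact Or.inl (Or.inl rfl)
    · exact Or.inl (Or.inr (Or.inl rfl))
    · exact Or.inl (Or.inr (Or.inr (Or.inl rfl)))
    · exact Or.inl (Or.inr (Or.inr (Or.inr rfl)))
    · exact Or.inr dist48

-- the permutation exchanging the two stars
def f : Fin 9 → Fin 9 := ![4, 5, 6, 7, 0, 1, 2, 3, 8]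

def e : Equiv.Perm (Fin 9) where
  toFun := f
  invFun := f
  left_inv := by decide
  right_inv := by decide

end BipSubIso

open BipSubIso in
/-- There exist two rooted neighborhood subgraphs in a bipartite graph that are
subgraph-isomorphic (roots `u`, `u'`, each with three identically-featured neighbors;
in the first rooted subgraph the neighbors pairwise share no second-hop common neighbor
while in the second two of them do) but not bipartite-subgraph-isomorphic: no
feature-preserving bijection of the 2-hop neighborhoods preserving all edges exists. -/
theorem exists_subgraph_iso_not_bipartite_subgraph_iso :
    ∃ (V : Type) (_ : Fintype V) (G : SimpleGraph V) (U I : Set V) (feat : V → ℕ)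
      (u u' : V),
      (∀ v, v ∈ U ∨ v ∈ I) ∧ Disjoint U I ∧
      (∀ a b, G.Adj a b → (a ∈ U ∧ b ∈ I) ∨ (a ∈ I ∧ b ∈ U)) ∧
      -- each root has exactly three neighbors, all carrying identical features
      (G.neighborSet u).ncard = 3 ∧ (G.neighborSet u').ncard = 3 ∧
      (∀ v ∈ G.neighborSet u, ∀ w ∈ G.neighborSet u ∪ G.neighborSet u', feat v = feat w) ∧
      feat u = feat u' ∧
      -- neighbors of u pairwise share no second-hop common neighbor ...
      (∀ v ∈ G.neighborSet u, ∀ w ∈ G.neighborSet u, v ≠ w →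
        ∀ x, G.Adj v x → G.Adj w x → x = u) ∧
      -- ... while two neighbors of u' do
      (∃ v ∈ G.neighborSet u', ∃ w ∈ G.neighborSet u', v ≠ w ∧
        ∃ x, x ≠ u' ∧ G.Adj v x ∧ G.Adj w x) ∧
      -- S_u and S_{u'} are subgraph-isomorphic
      (∃ h : (insert u (G.neighborSet u) : Set V) ≃ (insert u' (G.neighborSet u') : Set V),
        (h ⟨u, Set.mem_insert u _⟩ : V) = u' ∧
        (∀ v : (insert u (G.neighborSet u) : Set V), feat v = feat (h v)) ∧
        (∀ v₁ v₂ : (insert u (G.neighborSet u) : Set V),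
          G.Adj v₁ v₂ ↔ G.Adj (h v₁) (h v₂))) ∧
      -- but S_u and S_{u'} are not bipartite-subgraph-isomorphic
      ¬ (∃ h : ((insert u (G.neighborSet u) ∪ {v | G.dist u v = 2}) : Set V) ≃
               ((insert u' (G.neighborSet u') ∪ {v | G.dist u' v = 2}) : Set V),
          (h ⟨u, Or.inl (Set.mem_insert u _)⟩ : V) = u' ∧
          (∀ v : ((insert u (G.neighborSet u) ∪ {v | G.dist u v = 2}) : Set V),
            feat v = feat (h v)) ∧
          (∀ v v' : ((insert u (G.neighborSet u) ∪ {v | G.dist u v = 2}) : Set V),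
            G.Adj v v' ↔ G.Adj (h v) (h v'))) := by
  refine ⟨Fin 9, inferInstance, G9, {v | v = 0 ∨ v = 4 ∨ v = 8},
    {v | v = 1 ∨ v = 2 ∨ v = 3 ∨ v = 5 ∨ v = 6 ∨ v = 7}, fun _ => 0, 0, 4,
    ?_, ?_, ?_, ?_, ?_, ?_, rfl, ?_, ?_, ?_, ?_⟩
  · intro v; revert v; decide
  · rw [Set.disjoint_left]; intro v; revert v; decide
  · intro a b hab
    revert hab; revert a b; decide
  · exact Set.ncard_eq_three.mpr ⟨1, 2, 3, by decide, by decide, by decide, nbhd_left⟩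
  · exact Set.ncard_eq_three.mpr ⟨5, 6, 7, by decide, by decide, by decide, nbhd_right⟩
  · intro _ _ _ _; rfl
  · intro v hv w hw hvw x hvx hwx
    rw [SimpleGraph.mem_neighborSet] at hv hw
    revert hv hw hvw hvx hwx
    revert v w x; decide
  · refine ⟨5, by rw [nbhd_right]; decide, 6, by rw [nbhd_right]; decide, by decide,
      8, by decide, by decide, by decide⟩
  · -- subgraph isomorphism via the permutation e
    have hmem : ∀ x : Fin 9, x ∈ (insert 0 (G9.neighborSet 0) : Set (Fin 9)) ↔
        e x ∈ (insert 4 (G9.neighborSet 4) : Set (Fin 9)) := by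
      intro x
      rw [nbhd_left, nbhd_right]
      simp only [Set.mem_insert_iff, Set.mem_singleton_iff]
      revert x; decide
    refine ⟨Equiv.subtypeEquiv e hmem, rfl, fun _ => rfl, ?_⟩
    rintro ⟨x, hx⟩ ⟨y, hy⟩
    rw [Set.mem_insert_iff, nbhd_left] at hx hy
    show G9.Adj x y ↔ G9.Adj (e x) (e y)
    simp only [Set.mem_insert_iff, Set.mem_singleton_iff] at hx hy
    revert hx hy; revert x y; decide
  · rintro ⟨h, -, -, -⟩
    have hcard := Nat.card_congr h
    rw [Nat.card_coe_set_eq, Nat.card_coe_set_eq, twohop_left, twohop_right] at hcard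
    have h4 : ({0, 1, 2, 3} : Set (Fin 9)).ncard = 4 := by
      rw [show ({0, 1, 2, 3} : Set (Fin 9)) = (({0, 1, 2, 3} : Finset (Fin 9)) : Set (Fin 9))
        by simp, Set.ncard_coe_finset]
      decide
    have h5 : ({4, 5, 6, 7, 8} : Set (Fin 9)).ncard = 5 := by
      rw [show ({4, 5, 6, 7, 8} : Set (Fin 9)) = (({4, 5, 6, 7, 8} : Finset (Fin 9)) : Set (Fin 9))
        by simp, Set.ncard_coe_finset]
      decide
    rw [h4, h5] at hcard
    exact absurd hcard (by decide)
end
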